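/- Let Γ be a finite connected graph with blocks Bl(Γ), let f : V(Γ) → ℤ be a function nonzero on each cut vertex, let I_Γ = [ℤ : f(A(Γ))] (the positive gcd of the values f(v)), and for each block B let I_{Γ,B} = [f(A(Γ)) : f(A(B))]. Suppose Γ = Λ ∪ B₀ where B₀ is a block containing a unique cut vertex v₀ and Λ is the union of the other blocks, with Λ ∩ B₀ = {v₀}. Then the quantity m(Γ, f) = 1 − Σ_{B ∈ Bl(Γ)} I_{Γ,B} + Σ_{v ∈ V(Γ)} (bldeg_Γ(v) − 1)·|f(v)|/I_Γ satisfies m(Γ, f) = b₁ + I_{Γ,Λ}·m(Λ, f), where b₁ = 1 − (I_{Γ,Λ} + I_{Γ,B₀}) + |f(v₀)|/I_Γ. -/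

import Mathlib

/-- A set of vertices is biconnected if it induces a connected subgraph which stays
(pre)connected after the removal of any one of its vertices (i.e. it has no cut vertex). -/
def Biconnected {V : Type*} (Γ : SimpleGraph V) (B : Set V) : Prop :=
  (Γ.induce B).Connected ∧ ∀ v ∈ B, (Γ.induce (B \ {v})).Preconnected

/-- A block of Γ is a maximal biconnected set of vertices (a maximal biconnected full
subgraph). -/
def IsBlock {V : Type*} (Γ : SimpleGraph V) (B : Set V) : Prop :=
  Biconnected Γ B ∧ ∀ C : Set V, B ⊆ C → Biconnected Γ C → B = C

/-- A cut vertex is a vertex whose removal disconnects the graph. -/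
def IsCutVertex {V : Type*} (Γ : SimpleGraph V) (v : V) : Prop :=
  ¬ (Γ.induce ({v}ᶜ : Set V)).Preconnected

/-- The subgroup of ℤ generated by the values of `f` on `S` (i.e. `f(A(Δ))` for the full
subgraph Δ on `S`). -/
def valGrp {W : Type*} (f : W → ℤ) (S : Set W) : AddSubgroup ℤ :=
  AddSubgroup.closure (f '' S)

/-- `I_Γ = [ℤ : f(A(Γ))]`. -/
noncomputable def Ienv {W : Type*} (f : W → ℤ) : ℕ := (valGrp f Set.univ).index

/-- `I_{Γ,Δ} = [f(A(Γ)) : f(A(Δ))]`, the relative index. -/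
noncomputable def Irel {W : Type*} (f : W → ℤ) (S : Set W) : ℕ :=
  (valGrp f S).relIndex (valGrp f Set.univ)

/-- The block degree of a vertex: the number of blocks containing it. -/
noncomputable def bldeg {W : Type*} (Γ : SimpleGraph W) (v : W) : ℕ :=
  Set.ncard {B : Set W | IsBlock Γ B ∧ v ∈ B}

/-- The quantity
`m(Γ,f) = 1 − Σ_{B ∈ Bl(Γ)} I_{Γ,B} + Σ_{v ∈ V(Γ)} (bldeg_Γ(v) − 1)·|f(v)|/I_Γ`. -/
noncomputable def mval {W : Type*} (Γ : SimpleGraph W) (f : W → ℤ) : ℝ :=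
  1 - (∑ᶠ B ∈ {B : Set W | IsBlock Γ B}, (Irel f B : ℝ))
    + ∑ᶠ v : W, ((bldeg Γ v : ℝ) - 1) * |(f v : ℝ)| / (Ienv f : ℝ)

namespace Stmt17Aux

open Set SimpleGraph

variable {V : Type*} (Γ : SimpleGraph V)

noncomputable def indIso (Λ : Set V) (S : Set ↥Λ) :
    (Γ.induce Λ).induce S ≃g Γ.induce (Subtype.val '' S) where
  toEquiv := Equiv.Set.image Subtype.val S Subtype.val_injective
  map_rel_iff' := by
    rintro ⟨⟨a, ha⟩, ha'⟩ ⟨⟨b, hb⟩, hb'⟩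
    simp [Equiv.Set.image, Equiv.Set.imageOfInjOn]

lemma image_diff_singleton (Λ : Set V) (S : Set ↥Λ) (w : ↥Λ) :
    Subtype.val '' (S \ {w}) = (Subtype.val '' S) \ {(w : V)} := by
  rw [Set.image_diff Subtype.val_injective, Set.image_singleton]

lemma biconnected_image_iff (Λ : Set V) (S : Set ↥Λ) :
    Biconnected (Γ.induce Λ) S ↔ Biconnected Γ (Subtype.val '' S) := by
  constructor
  · rintro ⟨hc, hd⟩
    refine ⟨((indIso Γ Λ S).connected_iff).mp hc, ?_⟩
    rintro v ⟨w, hw, rfl⟩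
    have := (indIso Γ Λ (S \ {w})).preconnected_iff.mp (hd w hw)
    rwa [image_diff_singleton] at this
  · rintro ⟨hc, hd⟩
    refine ⟨((indIso Γ Λ S).connected_iff).mpr hc, ?_⟩
    intro w hw
    refine (indIso Γ Λ (S \ {w})).preconnected_iff.mpr ?_
    rw [image_diff_singleton]
    exact hd _ ⟨w, hw, rfl⟩

lemma preconnected_subsingleton {S : Set V} (h : S.Subsingleton) :
    (Γ.induce S).Preconnected := by
  intro a b
  have : a = b := Subtype.ext (h a.2 b.2)
  rw [this]

lemma biconnected_pair {u v : V} (huv : Γ.Adj u v) : Biconnected Γ {u, v} := by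
  constructor
  · haveI : Nonempty ↥({u, v} : Set V) := ⟨⟨u, Or.inl rfl⟩⟩
    refine SimpleGraph.Connected.mk ?_
    rintro ⟨a, ha⟩ ⟨b, hb⟩
    by_cases hab : a = b
    · subst hab; exact Reachable.refl _
    · refine Adj.reachable ?_
      show Γ.Adj a b
      rcases ha with rfl | rfl <;> rcases hb with rfl | rfl
      · exact absurd rfl hab
      · exact huv
      · exact huv.symm
      · exact absurd rfl hab
  · intro w hw
    refine preconnected_subsingleton Γ ?_
    rintro x ⟨hx, hx'⟩ y ⟨hy, hy'⟩
    rcases hw with rfl | rfl <;> rcases hx with rfl | rfl <;> rcases hy with rfl | rfl <;>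
      simp_all

lemma exists_block [Finite V] {S : Set V} (h : Biconnected Γ S) :
    ∃ B, IsBlock Γ B ∧ S ⊆ B := by
  obtain ⟨B, hB, hmax⟩ := Set.Finite.exists_maximalFor id {C : Set V | S ⊆ C ∧ Biconnected Γ C}
    (Set.toFinite _) ⟨S, subset_rfl, h⟩
  exact ⟨B, ⟨hB.2, fun C hBC hC => hBC.antisymm (hmax (j := C) ⟨hB.1.trans hBC, hC⟩ hBC)⟩, hB.1⟩

lemma exists_adj_of_reachable_ne {W : Type*} {G : SimpleGraph W} {a b : W}
    (h : G.Reachable a b) (hn : a ≠ b) : ∃ c, G.Adj a c := by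
  obtain ⟨p⟩ := h
  cases p with
  | nil => exact absurd rfl hn
  | cons h _ => exact ⟨_, h⟩

lemma index_ne_zero_of_mem {H : AddSubgroup ℤ} {n : ℤ} (hn : n ∈ H) (h0 : n ≠ 0) :
    H.index ≠ 0 := by
  have hle : AddSubgroup.zmultiples n ≤ H := by
    rintro x ⟨k, rfl⟩
    exact AddSubgroup.zsmul_mem H hn k
  have hdvd : H.index ∣ (AddSubgroup.zmultiples n).index := AddSubgroup.index_dvd_of_le hle
  rw [Int.index_zmultiples] at hdvd
  intro h
  rw [h] at hdvd
  exact h0 (Int.natAbs_eq_zero.mp (zero_dvd_iff.mp hdvd))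

lemma valGrp_mono {W : Type*} (f : W → ℤ) {S T : Set W} (h : S ⊆ T) :
    valGrp f S ≤ valGrp f T :=
  AddSubgroup.closure_mono (Set.image_mono h)

lemma valGrp_restrict (f : V → ℤ) (Λ : Set V) (S : Set ↥Λ) :
    valGrp (fun w : ↥Λ => f w.1) S = valGrp f (Subtype.val '' S) := by
  unfold valGrp
  rw [Set.image_image]

lemma finsum_mem_mul_left {α : Type*} (c : ℝ) {s : Set α} (hs : s.Finite) (g : α → ℝ) :
    ∑ᶠ i ∈ s, c * g i = c * ∑ᶠ i ∈ s, g i := by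
  rw [finsum_mem_eq_finite_toFinset_sum _ hs, finsum_mem_eq_finite_toFinset_sum _ hs,
    Finset.mul_sum]

section Main
set_option linter.unusedSectionVars false

variable {V : Type*} [Fintype V] {Γ : SimpleGraph V} {Λ B₀ : Set V} {v₀ : V}
variable (hB₀ : IsBlock Γ B₀) (hv₀B : v₀ ∈ B₀)
variable (hΛ : Λ = ⋃₀ {B : Set V | IsBlock Γ B ∧ B ≠ B₀})
variable (hmeet : Λ ∩ B₀ = {v₀})

include hΛ in
lemma block_subset_lam {B : Set V} (hB : IsBlock Γ B) (hne : B ≠ B₀) : B ⊆ Λ := by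
  rw [hΛ]; exact subset_sUnion_of_mem ⟨hB, hne⟩

include hmeet in
lemma v0_mem_lam : v₀ ∈ Λ := by
  have : v₀ ∈ Λ ∩ B₀ := by rw [hmeet]; rfl
  exact this.1

include hB₀ hv₀B hΛ hmeet in
/-- `v₀` has a neighbour inside `Λ`. -/
lemma exists_neighbor : ∃ w, w ∈ Λ ∧ Γ.Adj v₀ w := by
  have hv₀Λ : v₀ ∈ Λ := v0_mem_lam hmeet
  rw [hΛ] at hv₀Λ
  obtain ⟨B, ⟨hB, hne⟩, hv₀B'⟩ := hv₀Λ
  have hBΛ : B ⊆ Λ := block_subset_lam hΛ hB hne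
  have hBne : B ≠ {v₀} := by
    rintro rfl
    exact hne (hB.2 B₀ (singleton_subset_iff.mpr hv₀B) hB₀.1)
  obtain ⟨u, huB, hu⟩ := exists_of_ssubset
    (ssubset_of_subset_of_ne (singleton_subset_iff.mpr hv₀B') (Ne.symm hBne))
  have hreach : (Γ.induce B).Reachable ⟨v₀, hv₀B'⟩ ⟨u, huB⟩ := hB.1.1.preconnected _ _
  obtain ⟨c, hc⟩ := exists_adj_of_reachable_ne hreach
    (by simp only [ne_eq, Subtype.mk.injEq]; exact fun h => hu (mem_singleton_iff.mpr h.symm))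
  exact ⟨c.1, hBΛ c.2, hc⟩

include hB₀ hv₀B hΛ hmeet in
lemma image_ne_singleton {B' : Set ↥Λ} (hB' : IsBlock (Γ.induce Λ) B') :
    Subtype.val '' B' ≠ {v₀} := by
  intro heq
  obtain ⟨w, hwΛ, hadj⟩ := exists_neighbor hB₀ hv₀B hΛ hmeet
  have hv₀Λ : v₀ ∈ Λ := v0_mem_lam hmeet
  set x₀ : ↥Λ := ⟨v₀, hv₀Λ⟩
  set y : ↥Λ := ⟨w, hwΛ⟩
  have hadj' : (Γ.induce Λ).Adj x₀ y := hadj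
  have hsub : B' ⊆ {x₀, y} := by
    intro z hz
    have : z.1 ∈ ({v₀} : Set V) := heq ▸ mem_image_of_mem _ hz
    exact Or.inl (Subtype.ext this)
  have := hB'.2 _ hsub (biconnected_pair _ hadj')
  have hwmem : w ∈ Subtype.val '' B' := this ▸ ⟨y, Or.inr rfl, rfl⟩
  rw [heq] at hwmem
  exact hadj.ne (mem_singleton_iff.mp hwmem).symm

include hΛ in
lemma block_preimage {B : Set V} (hB : IsBlock Γ B) (hne : B ≠ B₀) :
    IsBlock (Γ.induce Λ) (Subtype.val ⁻¹' B) ∧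
      Subtype.val '' (Subtype.val ⁻¹' B : Set ↥Λ) = B := by
  have hBΛ : B ⊆ Λ := block_subset_lam hΛ hB hne
  have himg : Subtype.val '' (Subtype.val ⁻¹' B : Set ↥Λ) = B := by
    rw [Subtype.image_preimage_coe]
    exact inter_eq_self_of_subset_right hBΛ
  refine ⟨⟨?_, ?_⟩, himg⟩
  · rw [biconnected_image_iff, himg]; exact hB.1
  · intro C' hsub hC'
    have hCbic : Biconnected Γ (Subtype.val '' C') := (biconnected_image_iff _ _ _).mp hC'
    have hBsub : B ⊆ Subtype.val '' C' := by
      rw [← himg]; exact image_mono hsub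
    have hBeq : B = Subtype.val '' C' := hB.2 _ hBsub hCbic
    rw [← Set.preimage_image_eq C' Subtype.val_injective, ← hBeq]

include hB₀ hv₀B hΛ hmeet in
lemma block_image {B' : Set ↥Λ} (hB' : IsBlock (Γ.induce Λ) B') :
    IsBlock Γ (Subtype.val '' B') ∧ Subtype.val '' B' ≠ B₀ := by
  have hpre : Subtype.val ⁻¹' (Subtype.val '' B') = B' :=
    Set.preimage_image_eq B' Subtype.val_injective
  have himgΛ : Subtype.val '' B' ⊆ Λ := by rintro v ⟨w, _, rfl⟩; exact w.2
  have hnonempty : (Subtype.val '' B').Nonempty := by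
    haveI := hB'.1.1.nonempty
    exact (Set.nonempty_coe_sort.mp this).image _
  have hbic : Biconnected Γ (Subtype.val '' B') := (biconnected_image_iff _ _ _).mp hB'.1
  have hne : Subtype.val '' B' ≠ B₀ := by
    intro heq
    have hsubv : Subtype.val '' B' ⊆ {v₀} := by
      rw [← hmeet]; exact subset_inter himgΛ heq.le
    exact image_ne_singleton hB₀ hv₀B hΛ hmeet hB'
      (Subset.antisymm hsubv (singleton_subset_iff.mpr (by
        obtain ⟨x, hx⟩ := hnonempty
        have := hsubv hx
        rwa [mem_singleton_iff.mp this] at hx)))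
  refine ⟨⟨hbic, ?_⟩, hne⟩
  intro C hsub hC
  obtain ⟨D, hD, hCD⟩ := exists_block Γ hC
  by_cases hDB₀ : D = B₀
  · exfalso
    have hsubv : Subtype.val '' B' ⊆ {v₀} := by
      rw [← hmeet]
      exact subset_inter himgΛ ((hsub.trans hCD).trans hDB₀.le)
    exact image_ne_singleton hB₀ hv₀B hΛ hmeet hB'
      (Subset.antisymm hsubv (singleton_subset_iff.mpr (by
        obtain ⟨x, hx⟩ := hnonempty
        have := hsubv hx
        rwa [mem_singleton_iff.mp this] at hx)))
  · have hCΛ : C ⊆ Λ := hCD.trans (block_subset_lam hΛ hD hDB₀)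
    have hCimg : Subtype.val '' (Subtype.val ⁻¹' C : Set ↥Λ) = C := by
      rw [Subtype.image_preimage_coe]
      exact inter_eq_self_of_subset_right hCΛ
    have hCbic : Biconnected (Γ.induce Λ) (Subtype.val ⁻¹' C) := by
      rw [biconnected_image_iff, hCimg]; exact hC
    have hB'sub : B' ⊆ Subtype.val ⁻¹' C := by
      intro z hz
      exact hsub (mem_image_of_mem _ hz)
    have := hB'.2 _ hB'sub hCbic
    rw [this, hCimg]

include hB₀ hv₀B hΛ hmeet in
lemma blocks_bijOn :
    Set.BijOn (fun B : Set V => (Subtype.val ⁻¹' B : Set ↥Λ))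
      {B : Set V | IsBlock Γ B ∧ B ≠ B₀} {B' : Set ↥Λ | IsBlock (Γ.induce Λ) B'} := by
  refine ⟨?_, ?_, ?_⟩
  · rintro B ⟨hB, hne⟩
    exact (block_preimage hΛ hB hne).1
  · rintro B ⟨hB, hBne⟩ C ⟨hC, hCne⟩ h
    rw [← (block_preimage hΛ hB hBne).2, ← (block_preimage hΛ hC hCne).2]
    exact congrArg _ h
  · rintro B' hB'
    obtain ⟨hblk, hne⟩ := block_image hB₀ hv₀B hΛ hmeet hB'
    exact ⟨Subtype.val '' B', ⟨hblk, hne⟩,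
      Set.preimage_image_eq B' Subtype.val_injective⟩

include hB₀ hv₀B hΛ hmeet in
lemma blocks_with_vertex (w : ↥Λ) :
    {B' : Set ↥Λ | IsBlock (Γ.induce Λ) B' ∧ w ∈ B'} =
      (fun B : Set V => (Subtype.val ⁻¹' B : Set ↥Λ)) ''
        {B : Set V | (IsBlock Γ B ∧ B ≠ B₀) ∧ w.1 ∈ B} := by
  ext B'
  constructor
  · rintro ⟨hB', hw⟩
    obtain ⟨hblk, hne⟩ := block_image hB₀ hv₀B hΛ hmeet hB'
    exact ⟨Subtype.val '' B', ⟨⟨hblk, hne⟩, mem_image_of_mem _ hw⟩,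
      Set.preimage_image_eq B' Subtype.val_injective⟩
  · rintro ⟨B, ⟨⟨hB, hne⟩, hwB⟩, rfl⟩
    exact ⟨(block_preimage hΛ hB hne).1, hwB⟩

include hB₀ hv₀B hΛ hmeet in
lemma bldeg_eq_of_ne {w : ↥Λ} (hw : w.1 ≠ v₀) :
    bldeg Γ w.1 = bldeg (Γ.induce Λ) w := by
  have hset : {B : Set V | IsBlock Γ B ∧ w.1 ∈ B} =
      {B : Set V | (IsBlock Γ B ∧ B ≠ B₀) ∧ w.1 ∈ B} := by
    ext B
    constructor
    · rintro ⟨hB, hwB⟩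
      refine ⟨⟨hB, ?_⟩, hwB⟩
      rintro rfl
      have : w.1 ∈ Λ ∩ B := ⟨w.2, hwB⟩
      rw [hmeet] at this
      exact hw this
    · rintro ⟨⟨hB, _⟩, hwB⟩
      exact ⟨hB, hwB⟩
  unfold bldeg
  rw [hset, blocks_with_vertex hB₀ hv₀B hΛ hmeet w,
    Set.ncard_image_of_injOn ((blocks_bijOn hB₀ hv₀B hΛ hmeet).2.1.mono
      (fun B hB => hB.1))]

include hB₀ hv₀B hΛ hmeet in
lemma bldeg_v0 (hv₀Λ : v₀ ∈ Λ) :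
    bldeg Γ v₀ = bldeg (Γ.induce Λ) ⟨v₀, hv₀Λ⟩ + 1 := by
  have hset : {B : Set V | IsBlock Γ B ∧ v₀ ∈ B} =
      insert B₀ {B : Set V | (IsBlock Γ B ∧ B ≠ B₀) ∧ v₀ ∈ B} := by
    ext B
    constructor
    · rintro ⟨hB, hvB⟩
      by_cases hne : B = B₀
      · exact Or.inl hne
      · exact Or.inr ⟨⟨hB, hne⟩, hvB⟩
    · rintro (rfl | ⟨⟨hB, _⟩, hvB⟩)
      · exact ⟨hB₀, hv₀B⟩
      · exact ⟨hB, hvB⟩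
  have hnotmem : B₀ ∉ {B : Set V | (IsBlock Γ B ∧ B ≠ B₀) ∧ v₀ ∈ B} := by
    rintro ⟨⟨_, hne⟩, _⟩
    exact hne rfl
  unfold bldeg
  rw [hset, Set.ncard_insert_of_notMem hnotmem (Set.toFinite _),
    blocks_with_vertex hB₀ hv₀B hΛ hmeet ⟨v₀, hv₀Λ⟩,
    Set.ncard_image_of_injOn ((blocks_bijOn hB₀ hv₀B hΛ hmeet).2.1.mono
      (fun B hB => hB.1))]

include hB₀ hΛ hmeet in
lemma bldeg_one {v : V} (hvB : v ∈ B₀) (hvΛ : v ∉ Λ) : bldeg Γ v = 1 := by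
  have hset : {B : Set V | IsBlock Γ B ∧ v ∈ B} = {B₀} := by
    ext B
    constructor
    · rintro ⟨hB, hvB'⟩
      by_contra hne
      exact hvΛ (block_subset_lam hΛ hB hne hvB')
    · rintro rfl
      exact ⟨hB₀, hvB⟩
  unfold bldeg
  rw [hset, Set.ncard_singleton]

end Main
end Stmt17Aux

open Stmt17Aux Set SimpleGraph in
theorem stmt_17 {V : Type*} [Fintype V] (Γ : SimpleGraph V) (hconn : Γ.Connected)
    (f : V → ℤ) (hf : ∀ v : V, IsCutVertex Γ v → f v ≠ 0)
    (Λ B₀ : Set V) (v₀ : V)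
    (hB₀ : IsBlock Γ B₀)
    (hv₀B : v₀ ∈ B₀) (hv₀cut : IsCutVertex Γ v₀)
    (huniq : ∀ w ∈ B₀, IsCutVertex Γ w → w = v₀)
    (hΛ : Λ = ⋃₀ {B : Set V | IsBlock Γ B ∧ B ≠ B₀})
    (hcover : Λ ∪ B₀ = Set.univ) (hmeet : Λ ∩ B₀ = {v₀}) :
    mval Γ f =
      (1 - ((Irel f Λ : ℝ) + (Irel f B₀ : ℝ)) + |(f v₀ : ℝ)| / (Ienv f : ℝ))
        + (Irel f Λ : ℝ) * mval (Γ.induce Λ) (fun v => f v.1) := by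
  classical
  set f' : ↥Λ → ℤ := fun w => f w.1 with hf'
  have hv₀Λ : v₀ ∈ Λ := v0_mem_lam hmeet
  have hfv₀ : f v₀ ≠ 0 := hf v₀ hv₀cut
  -- index bookkeeping
  have hgrp_univ : valGrp f' Set.univ = valGrp f Λ := by
    rw [hf', valGrp_restrict, Subtype.coe_image_univ]
  have hle : valGrp f Λ ≤ valGrp f Set.univ := valGrp_mono f (subset_univ Λ)
  have hEnv : Irel f Λ * Ienv f = Ienv f' := by
    unfold Ienv Irel
    rw [hgrp_univ]
    exact AddSubgroup.relIndex_mul_index hle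
  have hEnvΛ_ne : Ienv f' ≠ 0 := by
    unfold Ienv
    rw [hgrp_univ]
    exact index_ne_zero_of_mem (AddSubgroup.subset_closure (mem_image_of_mem f hv₀Λ)) hfv₀
  have ha_ne : Irel f Λ ≠ 0 := fun h => hEnvΛ_ne (by rw [← hEnv, h, zero_mul])
  have hIΓ_ne : Ienv f ≠ 0 := fun h => hEnvΛ_ne (by rw [← hEnv, h, mul_zero])
  have hBlockIdx : ∀ B : Set V, B ⊆ Λ →
      Irel f B = Irel f' (Subtype.val ⁻¹' B) * Irel f Λ := by
    intro B hBΛ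
    have himg : Subtype.val '' (Subtype.val ⁻¹' B : Set ↥Λ) = B := by
      rw [Subtype.image_preimage_coe]
      exact inter_eq_self_of_subset_right hBΛ
    have h1 : valGrp f' (Subtype.val ⁻¹' B) = valGrp f B := by
      rw [hf', valGrp_restrict, himg]
    unfold Irel
    rw [h1, hgrp_univ]
    exact (AddSubgroup.relIndex_mul_relIndex _ _ _ (valGrp_mono f hBΛ) hle).symm
  -- block sums
  set blocksΓ : Set (Set V) := {B : Set V | IsBlock Γ B} with hbΓ
  set blocksΛ : Set (Set ↥Λ) := {B' : Set ↥Λ | IsBlock (Γ.induce Λ) B'} with hbΛ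
  have hsplit : ∑ᶠ B ∈ blocksΓ, (Irel f B : ℝ)
      = (Irel f B₀ : ℝ) + ∑ᶠ B ∈ blocksΓ \ {B₀}, (Irel f B : ℝ) := by
    have : blocksΓ = insert B₀ (blocksΓ \ {B₀}) := by
      rw [Set.insert_diff_singleton, Set.insert_eq_of_mem (show B₀ ∈ blocksΓ from hB₀)]
    rw [this, finsum_mem_insert _ (fun h => h.2 rfl) (Set.toFinite _),
      Set.insert_diff_self_of_notMem (fun h => h.2 rfl)]
  have hdiff : blocksΓ \ {B₀} = {B : Set V | IsBlock Γ B ∧ B ≠ B₀} := by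
    ext B; simp [hbΓ, Set.mem_diff]
  have htransfer : ∑ᶠ B ∈ blocksΓ \ {B₀}, (Irel f B : ℝ)
      = ∑ᶠ B' ∈ blocksΛ, ((Irel f Λ : ℝ) * (Irel f' B' : ℝ)) := by
    rw [hdiff]
    refine finsum_mem_eq_of_bijOn _ (blocks_bijOn hB₀ hv₀B hΛ hmeet) ?_
    rintro B ⟨hB, hne⟩
    rw [hBlockIdx B (block_subset_lam hΛ hB hne)]
    push_cast
    ring
  have hblocksum : ∑ᶠ B ∈ blocksΓ, (Irel f B : ℝ)
      = (Irel f B₀ : ℝ) + (Irel f Λ : ℝ) * ∑ᶠ B' ∈ blocksΛ, (Irel f' B' : ℝ) := by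
    rw [hsplit, htransfer, finsum_mem_mul_left _ (Set.toFinite _)]
  -- vertex sums
  set a : ℝ := (Irel f Λ : ℝ) with haa
  have ha_ne' : a ≠ 0 := by
    simp only [haa, ne_eq, Nat.cast_eq_zero]
    exact ha_ne
  have hIΓ_ne' : (Ienv f : ℝ) ≠ 0 := by
    simp only [ne_eq, Nat.cast_eq_zero]
    exact hIΓ_ne
  set gΓ : V → ℝ := fun v => ((bldeg Γ v : ℝ) - 1) * |(f v : ℝ)| / (Ienv f : ℝ) with hgΓ
  set gΛ : ↥Λ → ℝ :=
    fun w => ((bldeg (Γ.induce Λ) w : ℝ) - 1) * |(f' w : ℝ)| / (Ienv f' : ℝ) with hgΛ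
  set H : V → ℝ := fun v =>
    if v = v₀ then ((bldeg Γ v₀ : ℝ) - 2) * |(f v₀ : ℝ)| / (Ienv f : ℝ) else gΓ v with hH
  have hterm : ∀ w : ↥Λ, a * gΛ w = H w.1 := by
    intro w
    have hIr : (Ienv f' : ℝ) = a * (Ienv f : ℝ) := by
      rw [haa, ← hEnv]
      push_cast
      ring
    by_cases hwv : w.1 = v₀
    · have hww : (⟨v₀, hv₀Λ⟩ : ↥Λ) = w := Subtype.ext hwv.symm
      have hbd : (bldeg Γ v₀ : ℝ) = (bldeg (Γ.induce Λ) w : ℝ) + 1 := by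
        rw [← hww]
        exact_mod_cast bldeg_v0 hB₀ hv₀B hΛ hmeet hv₀Λ
      simp only [hgΛ, hIr]
      simp only [hH, hgΛ, hf', hIr, hwv, eq_self_iff_true, if_true]
      rw [hbd]
      field_simp
      ring
    · have hbd : (bldeg Γ w.1 : ℝ) = (bldeg (Γ.induce Λ) w : ℝ) := by
        exact_mod_cast bldeg_eq_of_ne hB₀ hv₀B hΛ hmeet hwv
      simp only [hgΛ, hIr]
      simp only [hH, hgΛ, hgΓ, hf', hIr, if_neg hwv]
      rw [← hbd]
      field_simp
  have hvsum1 : a * ∑ᶠ w : ↥Λ, gΛ w = ∑ᶠ v ∈ Λ, H v := by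
    rw [mul_finsum]
    have h1 : ∑ᶠ w : ↥Λ, a * gΛ w = ∑ᶠ w ∈ (Set.univ : Set ↥Λ), a * gΛ w :=
      (finsum_mem_univ _).symm
    rw [h1]
    refine finsum_mem_eq_of_bijOn Subtype.val ?_ ?_
    · exact ⟨fun w _ => w.2, fun w _ x _ h => Subtype.ext h,
        fun v hv => ⟨⟨v, hv⟩, mem_univ _, rfl⟩⟩
    · intro w _
      exact hterm w
  have hΛsplit : ∑ᶠ v ∈ Λ, gΓ v = gΓ v₀ + ∑ᶠ v ∈ Λ \ {v₀}, gΓ v := by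
    have : Λ = insert v₀ (Λ \ {v₀}) := by
      rw [Set.insert_diff_singleton, Set.insert_eq_of_mem hv₀Λ]
    rw [this, finsum_mem_insert _ (fun h => h.2 rfl) (Set.toFinite _),
      Set.insert_diff_self_of_notMem (fun h => h.2 rfl)]
  have hHsplit : ∑ᶠ v ∈ Λ, H v = H v₀ + ∑ᶠ v ∈ Λ \ {v₀}, H v := by
    have : Λ = insert v₀ (Λ \ {v₀}) := by
      rw [Set.insert_diff_singleton, Set.insert_eq_of_mem hv₀Λ]
    rw [this, finsum_mem_insert _ (fun h => h.2 rfl) (Set.toFinite _),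
      Set.insert_diff_self_of_notMem (fun h => h.2 rfl)]
  have hHG : ∑ᶠ v ∈ Λ \ {v₀}, H v = ∑ᶠ v ∈ Λ \ {v₀}, gΓ v := by
    refine finsum_mem_congr rfl ?_
    rintro v ⟨_, hv⟩
    simp only [hH]
    exact if_neg (fun h => hv h)
  have hHv₀ : gΓ v₀ = H v₀ + |(f v₀ : ℝ)| / (Ienv f : ℝ) := by
    simp only [hH, if_pos rfl, hgΓ]
    ring
  have hvLam : ∑ᶠ v ∈ Λ, gΓ v = ∑ᶠ v ∈ Λ, H v + |(f v₀ : ℝ)| / (Ienv f : ℝ) := by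
    rw [hΛsplit, hHsplit, hHG, hHv₀]
    ring
  -- total vertex sum over V
  have hunion : (Set.univ : Set V) = Λ ∪ (B₀ \ {v₀}) := by
    ext v
    simp only [Set.mem_univ, true_iff, Set.mem_union, Set.mem_diff, Set.mem_singleton_iff]
    by_cases hvΛ : v ∈ Λ
    · exact Or.inl hvΛ
    · have hvB : v ∈ B₀ := by
        have : v ∈ Λ ∪ B₀ := hcover ▸ Set.mem_univ v
        rcases this with h | h
        · exact absurd h hvΛ
        · exact h
      refine Or.inr ⟨hvB, ?_⟩
      rintro rfl
      exact hvΛ hv₀Λ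
  have hdisj : Disjoint Λ (B₀ \ {v₀}) := by
    rw [Set.disjoint_left]
    rintro v hvΛ ⟨hvB, hvne⟩
    apply hvne
    have : v ∈ Λ ∩ B₀ := ⟨hvΛ, hvB⟩
    rw [hmeet] at this
    exact this
  have hzero : ∑ᶠ v ∈ B₀ \ {v₀}, gΓ v = 0 := by
    refine finsum_mem_of_eqOn_zero ?_
    rintro v ⟨hvB, hvne⟩
    have hvΛ : v ∉ Λ := by
      intro hvΛ
      apply hvne
      have : v ∈ Λ ∩ B₀ := ⟨hvΛ, hvB⟩
      rw [hmeet] at this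
      exact this
    simp only [hgΓ, bldeg_one hB₀ hΛ hmeet hvB hvΛ]
    norm_num
  have hvtotal : ∑ᶠ v : V, gΓ v = ∑ᶠ v ∈ Λ, gΓ v := by
    rw [← finsum_mem_univ gΓ, hunion, finsum_mem_union hdisj (Set.toFinite _) (Set.toFinite _),
      hzero, add_zero]
  -- put everything together
  have hmΓ : mval Γ f = 1 - ((Irel f B₀ : ℝ)
        + a * ∑ᶠ B' ∈ blocksΛ, (Irel f' B' : ℝ))
      + (∑ᶠ v ∈ Λ, H v + |(f v₀ : ℝ)| / (Ienv f : ℝ)) := by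
    unfold mval
    rw [← hbΓ, hblocksum, ← hgΓ, hvtotal, hvLam, haa]
  have hmΛ : mval (Γ.induce Λ) f' = 1 - ∑ᶠ B' ∈ blocksΛ, (Irel f' B' : ℝ)
      + ∑ᶠ w : ↥Λ, gΛ w := by
    unfold mval
    rw [← hbΛ, ← hgΛ]
  rw [hmΓ, hmΛ, ← hvsum1]
  ring
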